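/- arXiv:0707.1263 — 4 statements merged into one kernel-verified Lean document; each statement's English description precedes it below -/
import Mathlib

section
/- Let α be a Pisot number. Then dist(α^k, ℤ) → 0 as k → ∞. -/
open IntermediateField Polynomial Finset

lemma my_abs_sub_round_le (x : ℝ) (n : ℤ) : |x - round x| ≤ |x - n| := by
  by_contra h
  push_neg at h
  have h1 : |x - round x| ≤ 1 / 2 := abs_sub_round x
  have h2 : |x - (n : ℝ)| < 1 / 2 := h.trans_le h1
  have h3 : |((round x : ℤ) : ℝ) - (n : ℝ)| < 1 := by
    calc |((round x : ℤ) : ℝ) - (n : ℝ)|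
        = |(x - (n:ℝ)) - (x - round x)| := by ring_nf
      _ ≤ |x - (n:ℝ)| + |x - round x| := abs_sub _ _
      _ < 1 / 2 + 1 / 2 := by linarith
      _ = 1 := by norm_num
  have h4 : round x = n := by
    have : |round x - n| < 1 := by exact_mod_cast (by exact_mod_cast h3 : (|round x - n| : ℝ) < 1)
    rw [abs_lt] at this
    omega
  rw [h4] at h
  exact absurd h (lt_irrefl _)


/-- A Pisot number: a real algebraic integer `α > 1` all of whose Galois
conjugates (the other complex roots of its minimal polynomial over `ℚ`)
have modulus strictly less than `1`. -/
def IsPisot (α : ℝ) : Prop :=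
  1 < α ∧ IsIntegral ℤ α ∧
    ∀ z : ℂ, z ∈ (minpoly ℚ α).aroots ℂ → z ≠ (α : ℂ) → ‖z‖ < 1

/-- For a Pisot number α, dist(α^k, ℤ) → 0 as k → ∞. -/
theorem pisot_dist_to_int_tendsto_zero (α : ℝ) (hα : IsPisot α) :
    Filter.Tendsto (fun k : ℕ => |α ^ k - round (α ^ k)|)
      Filter.atTop (nhds 0) := by
  classical
  obtain ⟨hα1, hint, hconj⟩ := hα
  have hQ : IsIntegral ℚ α := hint.tower_top
  haveI : FiniteDimensional ℚ ℚ⟮α⟯ := IntermediateField.adjoin.finiteDimensional hQ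
  set g : ℚ⟮α⟯ := AdjoinSimple.gen ℚ α with hg
  have hmapg : algebraMap ℚ⟮α⟯ ℝ g = α := AdjoinSimple.algebraMap_gen ℚ α
  -- the real embedding
  set σ₀ : ℚ⟮α⟯ →ₐ[ℚ] ℂ :=
    (Complex.ofRealHom.comp (algebraMap ℚ⟮α⟯ ℝ)).toRatAlgHom with hσ₀def
  have hσ₀ : σ₀ g = (α : ℂ) := by
    show Complex.ofRealHom (algebraMap ℚ⟮α⟯ ℝ g) = (α : ℂ)
    rw [hmapg]; rfl
  -- embeddings are determined by the image of g
  have hinj : ∀ σ τ : ℚ⟮α⟯ →ₐ[ℚ] ℂ, σ g = τ g → σ = τ := by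
    intro σ τ h
    refine (adjoin.powerBasis hQ).algHom_ext ?_
    rwa [adjoin.powerBasis_gen]
  -- images of g under other embeddings are small
  have hsmall : ∀ σ : ℚ⟮α⟯ →ₐ[ℚ] ℂ, σ ≠ σ₀ → ‖σ g‖ < 1 := by
    intro σ hσ
    refine hconj _ ?_ ?_
    · rw [Polynomial.mem_aroots]
      refine ⟨minpoly.ne_zero hQ, ?_⟩
      rw [Polynomial.aeval_algHom_apply, hg]
      exact (congrArg σ (aeval_gen_minpoly ℚ α)).trans (map_zero σ)
    · intro h
      exact hσ (hinj σ σ₀ (by rw [h, hσ₀]))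
  -- g is integral over ℤ
  have hgZ : IsIntegral ℤ g := by
    rw [← isIntegral_algebraMap_iff (R := ℤ) (algebraMap ℚ⟮α⟯ ℝ).injective, hmapg]
    exact hint
  -- for each k, there is an integer within the conjugate bound of α^k
  have key : ∀ k : ℕ, ∃ n : ℤ,
      |α ^ k - (n : ℝ)| ≤ ∑ σ ∈ Finset.univ.erase σ₀, (‖σ g‖) ^ k := by
    intro k
    have htr : IsIntegral ℤ (Algebra.trace ℚ ℚ⟮α⟯ (g ^ k)) :=
      Algebra.isIntegral_trace (hgZ.pow k)
    obtain ⟨n, hn⟩ := IsIntegrallyClosed.isIntegral_iff.mp htr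
    refine ⟨n, ?_⟩
    have hsum : ((n : ℚ) : ℂ) = ∑ σ : ℚ⟮α⟯ →ₐ[ℚ] ℂ, (σ g) ^ k := by
      rw [show ((n : ℚ) : ℂ) = algebraMap ℚ ℂ (algebraMap ℤ ℚ n) by push_cast; rfl, hn,
        trace_eq_sum_embeddings ℂ]
      exact Finset.sum_congr rfl fun σ _ => map_pow σ g k
    have hsplit : ((n : ℚ) : ℂ) = (α : ℂ) ^ k + ∑ σ ∈ Finset.univ.erase σ₀, (σ g) ^ k := by
      rw [hsum, ← hσ₀, ← Finset.add_sum_erase _ _ (Finset.mem_univ σ₀)]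
    have habs : ‖(α : ℂ) ^ k - ((n : ℚ) : ℂ)‖ ≤
        ∑ σ ∈ Finset.univ.erase σ₀, (‖σ g‖) ^ k := by
      rw [hsplit]
      calc ‖(α : ℂ) ^ k - ((α : ℂ) ^ k + ∑ σ ∈ Finset.univ.erase σ₀, (σ g) ^ k)‖
          = ‖∑ σ ∈ Finset.univ.erase σ₀, (σ g) ^ k‖ := by
            rw [show ((α : ℂ) ^ k - ((α : ℂ) ^ k + ∑ σ ∈ Finset.univ.erase σ₀, (σ g) ^ k))
              = -(∑ σ ∈ Finset.univ.erase σ₀, (σ g) ^ k) by ring, norm_neg]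
        _ ≤ ∑ σ ∈ Finset.univ.erase σ₀, ‖(σ g) ^ k‖ :=
            norm_sum_le _ _
        _ = ∑ σ ∈ Finset.univ.erase σ₀, (‖σ g‖) ^ k := by
            exact Finset.sum_congr rfl fun σ _ => norm_pow _ k
    calc |α ^ k - (n : ℝ)| = ‖(((α ^ k - (n : ℝ) : ℝ)) : ℂ)‖ := by
          rw [Complex.norm_real, Real.norm_eq_abs]
      _ = ‖(α : ℂ) ^ k - ((n : ℚ) : ℂ)‖ := by push_cast; ring_nf
      _ ≤ _ := habs
  -- choose the integers and conclude by squeezing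
  have hb : Filter.Tendsto
      (fun k : ℕ => ∑ σ ∈ Finset.univ.erase σ₀, (‖σ g‖) ^ k)
      Filter.atTop (nhds 0) := by
    rw [show (0 : ℝ) = ∑ _σ ∈ Finset.univ.erase σ₀, (0 : ℝ) from Finset.sum_const_zero.symm]
    exact tendsto_finset_sum _ fun σ hσ => tendsto_pow_atTop_nhds_zero_of_lt_one
      (norm_nonneg _) (hsmall σ (Finset.ne_of_mem_erase hσ))
  refine squeeze_zero (fun k => abs_nonneg _) (fun k => ?_) hb
  obtain ⟨n, hn⟩ := key k
  exact (my_abs_sub_round_le (α ^ k) n).trans hn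
end

section
/- Let α > 1 be a Pisot number, λ = 1/α, and let μ̂(ξ) = ∏_{n=1}^{∞} (1/3)(1 + 2e^{2πiλⁿξ}) (the Fourier transform of the 2D Hutchinson measure with digits {(0,0),(1,0),(0,1)} and equal weights, restricted to the line spanned by (1,1)). Then there exists C > 0 such that |μ̂(α^k)| ≥ C for all k ∈ ℕ₀. -/
open IntermediateField Polynomial Finset Real in
set_option maxHeartbeats 1000000 in
private lemma pisot_approx (α : ℝ) (hα : IsPisot α) :
    ∃ D : ℝ, 0 < D ∧ ∃ θ : ℝ, 0 ≤ θ ∧ θ < 1 ∧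
      ∀ k : ℕ, ∃ m : ℤ, |α ^ k - m| ≤ D * θ ^ k := by
  classical
  obtain ⟨hα1, hint, hconj⟩ := hα
  have hQ : IsIntegral ℚ α := hint.tower_top
  haveI : FiniteDimensional ℚ ℚ⟮α⟯ := IntermediateField.adjoin.finiteDimensional hQ
  set g := AdjoinSimple.gen ℚ α with hg
  have hgen : algebraMap ℚ⟮α⟯ ℝ g = α := IntermediateField.AdjoinSimple.algebraMap_gen ℚ α
  have hgint : IsIntegral ℤ g := by
    have := hint; rw [← hgen] at this
    exact IsIntegral.tower_bot_of_field this
  let σ₀ : ℚ⟮α⟯ →ₐ[ℚ] ℂ := (Complex.ofRealAm.restrictScalars ℚ).comp (IntermediateField.val _)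
  have hσ₀ : σ₀ g = (α : ℂ) := by
    show ((algebraMap ℚ⟮α⟯ ℝ g : ℝ) : ℂ) = (α : ℂ)
    rw [hgen]
  have hroot : ∀ σ : ℚ⟮α⟯ →ₐ[ℚ] ℂ, σ g ∈ (minpoly ℚ α).aroots ℂ := by
    intro σ
    rw [Polynomial.mem_aroots]
    refine ⟨minpoly.ne_zero hQ, ?_⟩
    have : minpoly ℚ g = minpoly ℚ α := by rw [hg, ← minpoly.algebraMap_eq (algebraMap ℚ⟮α⟯ ℝ).injective, AdjoinSimple.algebraMap_gen]
    rw [← this, Polynomial.aeval_algHom_apply, minpoly.aeval, map_zero]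
  have huniq : ∀ σ : ℚ⟮α⟯ →ₐ[ℚ] ℂ, σ g = (α : ℂ) → σ = σ₀ := by
    intro σ hσ
    apply IntermediateField.algHom_ext_of_eq_adjoin (K := ℂ) (hS := rfl)
    intro x hx
    rcases hx with rfl
    show σ (AdjoinSimple.gen ℚ x) = σ₀ (AdjoinSimple.gen ℚ x)
    rw [← hg, hσ, hσ₀]
  set s : Finset (ℚ⟮α⟯ →ₐ[ℚ] ℂ) := Finset.univ.erase σ₀ with hs
  have hsmall : ∀ σ ∈ s, ‖σ g‖ < 1 := by
    intro σ hσ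
    refine hconj _ (hroot σ) ?_
    intro h
    exact (Finset.mem_erase.mp hσ).1 (huniq σ h)
  set θn : NNReal := s.sup (fun σ => ‖σ g‖₊) with hθn
  have hθlt : (θn : ℝ) < 1 := by
    rw [← NNReal.coe_one, NNReal.coe_lt_coe]
    refine Finset.sup_lt_iff (by norm_num) |>.mpr ?_
    intro σ hσ
    have := hsmall σ hσ
    exact_mod_cast this
  refine ⟨s.card + 1, by linarith [Nat.cast_nonneg (α := ℝ) s.card], θn, θn.coe_nonneg, hθlt, ?_⟩
  intro k
  obtain ⟨m, hm⟩ : ∃ m : ℤ, (m : ℚ) = Algebra.trace ℚ ℚ⟮α⟯ (g ^ k) :=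
    IsIntegrallyClosed.isIntegral_iff.mp (Algebra.isIntegral_trace (hgint.pow k))
  refine ⟨m, ?_⟩
  have h2 : ((m : ℚ) : ℂ) = ∑ σ : ℚ⟮α⟯ →ₐ[ℚ] ℂ, (σ g) ^ k := by
    rw [show ((m:ℚ):ℂ) = algebraMap ℚ ℂ (m:ℚ) by norm_num, hm, trace_eq_sum_embeddings ℂ]
    simp [map_pow]
  push_cast at h2
  have hsplit : ∑ σ : ℚ⟮α⟯ →ₐ[ℚ] ℂ, (σ g) ^ k = (α:ℂ)^k + ∑ σ ∈ s, (σ g)^k := by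
    rw [hs, ← Finset.add_sum_erase _ _ (Finset.mem_univ σ₀), hσ₀]
  have key : ((α ^ k - m : ℝ) : ℂ) = -(∑ σ ∈ s, (σ g)^k) := by
    push_cast
    rw [h2, hsplit]; ring
  calc |α ^ k - (m:ℝ)| = ‖((α ^ k - m : ℝ) : ℂ)‖ := (RCLike.norm_ofReal (K := ℂ) _).symm
    _ = ‖∑ σ ∈ s, (σ g)^k‖ := by rw [key, norm_neg]
    _ ≤ ∑ σ ∈ s, ‖(σ g)^k‖ := norm_sum_le _ _
    _ ≤ ∑ σ ∈ s, (θn:ℝ)^k := by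
        refine Finset.sum_le_sum ?_
        intro σ hσ
        rw [norm_pow]
        refine pow_le_pow_left₀ (norm_nonneg _) ?_ k
        have : (‖σ g‖₊ : ℝ) ≤ θn := NNReal.coe_le_coe.mpr (Finset.le_sup (f := fun σ => ‖σ g‖₊) hσ)
        rwa [coe_nnnorm] at this
    _ = s.card * (θn:ℝ)^k := by rw [Finset.sum_const, nsmul_eq_mul]
    _ ≤ (s.card + 1) * (θn:ℝ)^k := by
        have : (0:ℝ) ≤ (θn:ℝ)^k := by positivity
        nlinarith

open Real in
private lemma aux_third_le (x : ℝ) :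
    1/3 ≤ ‖(1/3 : ℂ) * (1 + 2 * Complex.exp (2 * π * Complex.I * x))‖ := by
  have harg : (2 * π * Complex.I * x : ℂ) = (2 * π * x : ℝ) * Complex.I := by
    push_cast; ring
  have he : ‖Complex.exp (2 * π * Complex.I * x)‖ = 1 := by
    rw [harg, Complex.norm_exp_ofReal_mul_I]
  rw [norm_mul]
  have h13 : ‖(1/3 : ℂ)‖ = 1/3 := by
    simp [norm_div]
  rw [h13]
  have htri : ‖2 * Complex.exp (2 * π * Complex.I * x)‖ ≤
      ‖(1 : ℂ) + 2 * Complex.exp (2 * π * Complex.I * x)‖ + ‖(-1 : ℂ)‖ := by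
    have := norm_add_le ((1 : ℂ) + 2 * Complex.exp (2 * π * Complex.I * x)) (-1 : ℂ)
    simpa using this
  rw [norm_mul, he] at htri
  simp only [norm_neg, norm_one] at htri
  have h2 : ‖(2:ℂ)‖ = 2 := by norm_num
  rw [h2] at htri
  nlinarith [norm_nonneg ((1 : ℂ) + 2 * Complex.exp (2 * π * Complex.I * x))]

open Real in
private lemma aux_close (x : ℝ) (m : ℤ) (h : 2 * π * |x - m| ≤ 1) :
    ‖(1/3 : ℂ) * (1 + 2 * Complex.exp (2 * π * Complex.I * x)) - 1‖
      ≤ (8 * π / 3) * |x - m| := by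
  have hper : Complex.exp (2 * π * Complex.I * x)
      = Complex.exp (2 * π * Complex.I * (x - m : ℝ)) := by
    rw [show (2 * π * Complex.I * x : ℂ)
        = 2 * π * Complex.I * ((x - m : ℝ) : ℂ) + m * (2 * π * Complex.I) by push_cast; ring,
      Complex.exp_add, Complex.exp_int_mul_two_pi_mul_I, mul_one]
  have harg : (2 * π * Complex.I * ((x - m : ℝ) : ℂ))
      = ((2 * π * (x - m) : ℝ) : ℂ) * Complex.I := by
    push_cast; ring
  have habs : ‖2 * π * Complex.I * ((x - m : ℝ) : ℂ)‖ = 2 * π * |x - m| := by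
    rw [harg, norm_mul, Complex.norm_I, mul_one, Complex.norm_real, Real.norm_eq_abs, abs_mul]
    have : |2 * π| = 2 * π := abs_of_pos (by positivity)
    rw [this]
  have hkey : ‖Complex.exp (2 * π * Complex.I * ((x - m : ℝ) : ℂ)) - 1‖
      ≤ 2 * (2 * π * |x - m|) := by
    rw [← habs]
    exact Complex.norm_exp_sub_one_le (by rw [habs]; exact h)
  have hexpand : (1/3 : ℂ) * (1 + 2 * Complex.exp (2 * π * Complex.I * x)) - 1
      = (2/3 : ℂ) * (Complex.exp (2 * π * Complex.I * ((x - m : ℝ) : ℂ)) - 1) := by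
    rw [hper]; ring
  rw [hexpand, norm_mul]
  have h23 : ‖(2/3 : ℂ)‖ = 2/3 := by simp [norm_div]
  rw [h23]
  nlinarith [hkey]

private lemma aux_exp_le {x : ℝ} (h0 : 0 ≤ x) (h2 : x ≤ 1/2) :
    Real.exp (-(2 * x)) ≤ 1 - x := by
  have key : Real.exp (-(2*x)) * Real.exp (2*x) = 1 := by
    rw [← Real.exp_add]; ring_nf; exact Real.exp_zero
  nlinarith [Real.add_one_le_exp (2*x), Real.exp_pos (-(2*x)), Real.exp_pos (2*x)]

set_option maxHeartbeats 2000000 in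
open Real Filter Finset in
/-- Let α be a Pisot number, λ = 1/α, and
μ̂(ξ) = ∏_{n=1}^∞ (1/3)(1 + 2 e^{2πiλⁿξ}) (the Fourier transform of the
2D Hutchinson measure with digits {(0,0),(1,0),(0,1)} and equal weights,
restricted to the diagonal direction). Then ∃ C > 0 with
|μ̂(α^k)| ≥ C for all k ∈ ℕ₀. -/
theorem erdos_2d_diagonal_lower_bound (α lam : ℝ) (hα : IsPisot α)
    (hlam : lam = 1 / α) (F : ℝ → ℂ)
    (hF : ∀ ξ : ℝ, Tendsto
        (fun M : ℕ => ∏ n ∈ Finset.Icc 1 M,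
          (1/3 : ℂ) * (1 + 2 * Complex.exp (2 * π * Complex.I * (lam ^ n) * ξ)))
        atTop (nhds (F ξ))) :
    ∃ C > 0, ∀ k : ℕ, C ≤ ‖F (α ^ k)‖ := by
  classical
  obtain ⟨D, hD, θ, hθ0, hθ1, happrox⟩ := pisot_approx α hα
  have hα1 : 1 < α := hα.1
  have hα0 : 0 < α := by linarith
  have hlam0 : 0 < lam := by rw [hlam]; positivity
  have hlam1 : lam < 1 := by rw [hlam, div_lt_one hα0]; linarith
  set ρ : ℝ := max θ lam with hρ
  have hρ0 : 0 ≤ ρ := le_trans hθ0 (le_max_left _ _)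
  have hρ1 : ρ < 1 := max_lt hθ1 hlam1
  set D' : ℝ := max D 1 with hD'
  have hD'1 : 1 ≤ D' := le_max_right _ _
  have hD'0 : 0 < D' := by linarith
  have hπ : 0 < π := Real.pi_pos
  -- uniform approximation of lam^n * α^k by integers
  have approx : ∀ k n : ℕ, 1 ≤ n → ∃ m : ℤ,
      |lam ^ n * α ^ k - m| ≤ D' * ρ ^ (Nat.dist n k) := by
    intro k n _
    rcases le_or_gt n k with hnk | hkn
    · obtain ⟨m, hm⟩ := happrox (k - n)
      refine ⟨m, ?_⟩
      have hlp : lam ^ n = (α ^ n)⁻¹ := by rw [hlam, one_div, inv_pow]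
      have heq : lam ^ n * α ^ k = α ^ (k - n) := by
        rw [hlp, pow_sub₀ α (ne_of_gt hα0) hnk]
        field_simp
      rw [heq, Nat.dist_eq_sub_of_le hnk]
      refine le_trans hm ?_
      calc D * θ ^ (k - n) ≤ D' * θ ^ (k - n) :=
            mul_le_mul_of_nonneg_right (le_max_left _ _) (pow_nonneg hθ0 _)
        _ ≤ D' * ρ ^ (k - n) := mul_le_mul_of_nonneg_left
            (pow_le_pow_left₀ hθ0 (le_max_left _ _) _) hD'0.le
    · refine ⟨0, ?_⟩
      have h1 : lam * α = 1 := by rw [hlam]; field_simp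
      have heq : lam ^ n * α ^ k = lam ^ (n - k) := by
        conv_lhs => rw [← Nat.sub_add_cancel hkn.le, pow_add, mul_assoc, ← mul_pow, h1,
          one_pow, mul_one]
      rw [heq, Nat.dist_eq_sub_of_le_right hkn.le]
      push_cast
      rw [sub_zero, abs_of_pos (pow_pos hlam0 _)]
      calc lam ^ (n - k) ≤ ρ ^ (n - k) :=
            pow_le_pow_left₀ hlam0.le (le_max_right _ _) _
        _ ≤ D' * ρ ^ (n - k) := by nlinarith [pow_nonneg hρ0 (n - k)]
  -- choose N so that the error is small past distance N
  obtain ⟨N, hN⟩ := ((tendsto_pow_atTop_nhds_zero_of_lt_one hρ0 hρ1).eventually_lt_const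
    (show (0:ℝ) < (1/2) / ((8*π/3) * D') by positivity)).exists
  have hNgood : ∀ d : ℕ, N ≤ d → (8*π/3) * D' * ρ ^ d ≤ 1/2 := by
    intro d hd
    have h1 : ρ ^ d ≤ ρ ^ N := pow_le_pow_of_le_one hρ0 hρ1.le hd
    have h2 : ρ ^ N ≤ (1/2) / ((8*π/3) * D') := hN.le
    have h3 : (0:ℝ) < (8*π/3) * D' := by positivity
    calc (8*π/3) * D' * ρ ^ d ≤ (8*π/3) * D' * ((1/2) / ((8*π/3) * D')) := by
          have := h1.trans h2
          nlinarith
      _ = 1/2 := by field_simp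
  set S : ℝ := (16*π/3) * D' * (2 * (1-ρ)⁻¹) + (2*N) * Real.log 3 with hS
  refine ⟨Real.exp (-S), Real.exp_pos _, fun k => ?_⟩
  set c : ℕ → ℝ := fun n => (16*π/3) * D' * ρ ^ (Nat.dist n k)
      + (if Nat.dist n k < N then Real.log 3 else 0) with hc
  have hlog3 : (0:ℝ) ≤ Real.log 3 := Real.log_nonneg (by norm_num)
  -- per-factor lower bound
  have hfac : ∀ n : ℕ, 1 ≤ n → Real.exp (-(c n)) ≤ ‖
      (1/3 : ℂ) * (1 + 2 * Complex.exp (2 * π * Complex.I * (lam : ℂ) ^ n * ((α ^ k : ℝ) : ℂ)))‖ := by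
    intro n hn
    have hargeq : (2 * (π:ℂ) * Complex.I * (lam : ℂ) ^ n * ((α ^ k : ℝ) : ℂ))
        = 2 * (π:ℂ) * Complex.I * ((lam ^ n * α ^ k : ℝ) : ℂ) := by
      push_cast; ring
    rw [hargeq]
    set x : ℝ := lam ^ n * α ^ k with hx
    set d : ℕ := Nat.dist n k with hd
    obtain ⟨m, hm⟩ := approx k n hn
    rw [← hx, ← hd] at hm
    by_cases hdN : d < N
    · -- crude bound
      have h1 : Real.log 3 ≤ c n := by
        rw [hc]; simp only [← hd, if_pos hdN]
        have : (0:ℝ) ≤ (16*π/3) * D' * ρ ^ d := by positivity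
        linarith
      have h2 : Real.exp (-(c n)) ≤ Real.exp (-(Real.log 3)) :=
        Real.exp_le_exp.mpr (by linarith)
      have h3 : Real.exp (-(Real.log 3)) = 1/3 := by
        rw [Real.exp_neg, Real.exp_log (by norm_num : (0:ℝ) < 3)]
        norm_num
      rw [h3] at h2
      exact h2.trans (aux_third_le x)
    · push_neg at hdN
      have hsmall : (8*π/3) * D' * ρ ^ d ≤ 1/2 := hNgood d hdN
      set δ : ℝ := (8*π/3) * D' * ρ ^ d with hδ
      have hδ0 : 0 ≤ δ := by positivity
      have hxm : (8*π/3) * |x - m| ≤ δ := by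
        rw [hδ]
        have : (0:ℝ) < 8*π/3 := by positivity
        nlinarith [abs_nonneg (x - (m:ℝ))]
      have h2π : 2 * π * |x - m| ≤ 1 := by nlinarith [abs_nonneg (x - (m:ℝ))]
      have hclose := aux_close x m h2π
      have habs : 1 - δ ≤ ‖
          (1/3 : ℂ) * (1 + 2 * Complex.exp (2 * π * Complex.I * x))‖ := by
        set w : ℂ := (1/3 : ℂ) * (1 + 2 * Complex.exp (2 * π * Complex.I * x)) with hw
        have t : ‖w + (1 - w)‖ ≤ ‖w‖ + ‖1 - w‖ :=
          norm_add_le _ _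
        have t2 : ‖1 - w‖ = ‖w - 1‖ := norm_sub_rev _ _
        simp only [add_sub_cancel, norm_one] at t
        rw [t2] at t
        have := hclose.trans hxm
        linarith
      have hexp : Real.exp (-(c n)) ≤ 1 - δ := by
        have hceq : c n = 2 * δ := by
          rw [hc]; simp only [← hd, if_neg (not_lt.mpr hdN)]
          rw [hδ]; ring
        rw [hceq]
        exact aux_exp_le hδ0 hsmall
      exact hexp.trans habs
  -- sum of the exponents is bounded by S
  have hgeo : ∀ (t : Finset ℕ) (g : ℕ → ℕ), Set.InjOn g t →
      ∑ n ∈ t, ρ ^ (g n) ≤ (1 - ρ)⁻¹ := by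
    intro t g hinj
    have h1 : ∑ n ∈ t, ρ ^ (g n) = ∑ j ∈ t.image g, ρ ^ j :=
      (Finset.sum_image (fun a ha b hb h => hinj ha hb h)).symm
    rw [h1]
    refine le_trans ((summable_geometric_of_lt_one hρ0 hρ1).sum_le_tsum _
      (fun i _ => pow_nonneg hρ0 i)) ?_
    exact le_of_eq (tsum_geometric_of_lt_one hρ0 hρ1)
  have hcsum : ∀ M : ℕ, ∑ n ∈ Finset.Icc 1 M, c n ≤ S := by
    intro M
    rw [hc]
    rw [Finset.sum_add_distrib]
    have hA : ∑ n ∈ Finset.Icc 1 M, (16*π/3) * D' * ρ ^ (Nat.dist n k)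
        ≤ (16*π/3) * D' * (2 * (1-ρ)⁻¹) := by
      rw [← Finset.mul_sum]
      have hsplit : ∑ n ∈ Finset.Icc 1 M, ρ ^ (Nat.dist n k)
          = ∑ n ∈ (Finset.Icc 1 M).filter (· ≤ k), ρ ^ (Nat.dist n k)
          + ∑ n ∈ (Finset.Icc 1 M).filter (fun n => ¬ n ≤ k), ρ ^ (Nat.dist n k) :=
        (Finset.sum_filter_add_sum_filter_not _ _ _).symm
      have hB1 : ∑ n ∈ (Finset.Icc 1 M).filter (· ≤ k), ρ ^ (Nat.dist n k) ≤ (1-ρ)⁻¹ := by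
        have he : ∀ n ∈ (Finset.Icc 1 M).filter (· ≤ k), ρ ^ (Nat.dist n k) = ρ ^ (k - n) := by
          intro n hn
          rw [Nat.dist_eq_sub_of_le (Finset.mem_filter.mp hn).2]
        rw [Finset.sum_congr rfl he]
        refine hgeo _ _ ?_
        intro a ha b hb hab
        simp only [Finset.coe_filter, Set.mem_setOf_eq, Finset.mem_Icc] at ha hb
        have hab2 : k - a = k - b := hab
        omega
      have hB2 : ∑ n ∈ (Finset.Icc 1 M).filter (fun n => ¬ n ≤ k), ρ ^ (Nat.dist n k)
          ≤ (1-ρ)⁻¹ := by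
        have he : ∀ n ∈ (Finset.Icc 1 M).filter (fun n => ¬ n ≤ k),
            ρ ^ (Nat.dist n k) = ρ ^ (n - k) := by
          intro n hn
          have := (Finset.mem_filter.mp hn).2
          rw [Nat.dist_eq_sub_of_le_right (by omega)]
        rw [Finset.sum_congr rfl he]
        refine hgeo _ _ ?_
        intro a ha b hb hab
        simp only [Finset.coe_filter, Set.mem_setOf_eq, Finset.mem_Icc] at ha hb
        have hab2 : a - k = b - k := hab
        omega
      have hpos : (0:ℝ) ≤ (16*π/3) * D' := by positivity
      have := hsplit ▸ (add_le_add hB1 hB2)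
      nlinarith
    have hB : ∑ n ∈ Finset.Icc 1 M, (if Nat.dist n k < N then Real.log 3 else 0)
        ≤ (2*N) * Real.log 3 := by
      rw [← Finset.sum_filter]
      rw [Finset.sum_const, nsmul_eq_mul]
      have hsub : (Finset.Icc 1 M).filter (fun n => Nat.dist n k < N)
          ⊆ Finset.Ioc (k - N) (k + N) := by
        intro n hn
        simp only [Finset.mem_filter, Finset.mem_Icc] at hn
        obtain ⟨⟨hn1, _⟩, hnd⟩ := hn
        rw [Finset.mem_Ioc]
        rcases le_or_gt n k with h | h
        · rw [Nat.dist_eq_sub_of_le h] at hnd; omega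
        · rw [Nat.dist_eq_sub_of_le_right h.le] at hnd; omega
      have hcard : ((Finset.Icc 1 M).filter (fun n => Nat.dist n k < N)).card ≤ 2*N := by
        refine le_trans (Finset.card_le_card hsub) ?_
        rw [Nat.card_Ioc]
        omega
      have : (((Finset.Icc 1 M).filter (fun n => Nat.dist n k < N)).card : ℝ) ≤ (2*N : ℕ) :=
        Nat.cast_le.mpr hcard
      push_cast at this ⊢
      nlinarith
    rw [hS]
    push_cast at hB ⊢
    linarith
  -- lower bound for all partial products
  have hprod : ∀ M : ℕ, Real.exp (-S) ≤ ‖∏ n ∈ Finset.Icc 1 M,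
      (1/3 : ℂ) * (1 + 2 * Complex.exp (2 * π * Complex.I * (lam : ℂ) ^ n * ((α ^ k : ℝ) : ℂ)))‖ := by
    intro M
    have h1 : Real.exp (-S) ≤ Real.exp (-(∑ n ∈ Finset.Icc 1 M, c n)) :=
      Real.exp_le_exp.mpr (by linarith [hcsum M])
    have h2 : Real.exp (-(∑ n ∈ Finset.Icc 1 M, c n))
        = ∏ n ∈ Finset.Icc 1 M, Real.exp (-(c n)) := by
      rw [← Real.exp_sum, Finset.sum_neg_distrib]
    have h3 : ∏ n ∈ Finset.Icc 1 M, Real.exp (-(c n)) ≤ ∏ n ∈ Finset.Icc 1 M,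
        ‖(1/3 : ℂ) * (1 + 2 * Complex.exp
          (2 * π * Complex.I * (lam : ℂ) ^ n * ((α ^ k : ℝ) : ℂ)))‖ := by
      refine Finset.prod_le_prod (fun n _ => (Real.exp_pos _).le) ?_
      intro n hn
      exact hfac n (Finset.mem_Icc.mp hn).1
    have h4 : ∏ n ∈ Finset.Icc 1 M, ‖(1/3 : ℂ) * (1 + 2 * Complex.exp
          (2 * π * Complex.I * (lam : ℂ) ^ n * ((α ^ k : ℝ) : ℂ)))‖
        = ‖∏ n ∈ Finset.Icc 1 M, (1/3 : ℂ) * (1 + 2 * Complex.exp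
          (2 * π * Complex.I * (lam : ℂ) ^ n * ((α ^ k : ℝ) : ℂ)))‖ :=
      (norm_prod _ _).symm
    rw [h2] at h1
    rw [h4] at h3
    linarith
  have htend := (continuous_norm.tendsto (F (α ^ k))).comp (hF (α ^ k))
  exact ge_of_tendsto htend (Filter.Eventually.of_forall hprod)
end

section
/- Let μ = Σ_{b∈B} p_b μ∘τ_b⁻¹ be the unique (Hutchinson) invariant probability measure of an affine IFS τ_b(x) = A⁻¹(x+b) in ℝ^d, with A invertible expansive, B finite, p_b > 0, Σp_b = 1. Then in the Lebesgue decomposition μ = μ_{ac} + μ_s with respect to Lebesgue measure, either μ_{ac} = 0 or μ_s = 0; i.e., μ is either purely singular or absolutely continuous. -/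
open MeasureTheory Finset Matrix Filter Topology
open scoped NNReal ENNReal

attribute [local instance] Matrix.linftyOpNormedRing Matrix.linftyOpNormedAlgebra

lemma charpoly_eval_eq_det {d : ℕ} (M : Matrix (Fin d) (Fin d) ℂ) (z : ℂ) :
    M.charpoly.eval z = (Matrix.scalar (Fin d) z - M).det := by
  rw [Matrix.charpoly, eval_det, Matrix.matPolyEquiv_charmatrix]
  simp

lemma algebraMap_eq_scalar {d : ℕ} (z : ℂ) :
    (algebraMap ℂ (Matrix (Fin d) (Fin d) ℂ)) z = Matrix.scalar (Fin d) z := rfl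

lemma mem_spectrum_iff_root {d : ℕ} (M : Matrix (Fin d) (Fin d) ℂ) (z : ℂ) :
    z ∈ spectrum ℂ M ↔ M.charpoly.IsRoot z := by
  rw [spectrum.mem_iff, Polynomial.IsRoot, charpoly_eval_eq_det, algebraMap_eq_scalar,
    Matrix.isUnit_iff_isUnit_det]
  simp [isUnit_iff_ne_zero]

lemma norm_pow_inv_tendsto (d : ℕ) (A : Matrix (Fin d) (Fin d) ℝ) (hA : IsUnit A.det)
    (hexp : ∀ z : ℂ, (A.map (Complex.ofReal)).charpoly.IsRoot z → 1 < ‖z‖) :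
    Tendsto (fun n : ℕ => ‖((A.map Complex.ofReal)⁻¹) ^ n‖) atTop (𝓝 0) := by
  set Ac := A.map Complex.ofReal with hAc
  have hdet : IsUnit Ac.det := by
    have : Ac.det = Complex.ofReal A.det := ((Complex.ofRealHom).map_det A).symm
    rw [this, isUnit_iff_ne_zero]
    simpa using hA.ne_zero
  set M := Ac⁻¹ with hM
  have hu : IsUnit Ac := (Matrix.isUnit_iff_isUnit_det Ac).2 hdet
  have hMu : M = ↑(hu.unit⁻¹) := by
    rw [Matrix.coe_units_inv, IsUnit.unit_spec]
  -- spectrum of M : each element has nnnorm < 1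
  have hspec : ∀ z ∈ spectrum ℂ M, ‖z‖₊ < 1 := by
    intro z hz
    rw [hMu] at hz
    have hz0 : z ≠ 0 := by
      rintro rfl
      exact (spectrum.zero_notMem_iff ℂ).2 (hu.unit⁻¹).isUnit hz
    have hz' : (↑(Units.mk0 z hz0)⁻¹ : ℂ) ∈ spectrum ℂ (↑(hu.unit⁻¹)⁻¹ : Matrix (Fin d) (Fin d) ℂ) :=
      spectrum.inv_mem_iff.mp hz
    rw [inv_inv, IsUnit.unit_spec] at hz'
    have hroot : Ac.charpoly.IsRoot z⁻¹ := (mem_spectrum_iff_root _ _).mp hz'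
    have h1 : 1 < ‖z⁻¹‖ := hexp _ hroot
    rw [norm_inv] at h1
    have : ‖z‖ < 1 := by
      rcases lt_or_ge (‖z‖) 1 with h | h
      · exact h
      · exfalso
        have : ‖z‖ ≠ 0 := by simpa using hz0
        nlinarith [inv_le_one_of_one_le₀ h]
    simpa [← NNReal.coe_lt_coe] using this
  -- spectralRadius < 1
  have hfin : (spectrum ℂ M).Finite := by
    have hmono : (M.charpoly) ≠ 0 := M.charpoly_monic.ne_zero
    apply Set.Finite.subset (Polynomial.finite_setOf_isRoot hmono)
    intro z hz
    exact (mem_spectrum_iff_root _ _).mp hz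
  have hrad : spectralRadius ℂ M < 1 := by
    classical
    set F : Finset ℝ≥0 := hfin.toFinset.image (fun z => ‖z‖₊) with hF
    have hr1 : F.sup id < 1 := by
      rw [Finset.sup_lt_iff (by norm_num : (⊥ : ℝ≥0) < 1)]
      intro b hb
      rw [hF, Finset.mem_image] at hb
      obtain ⟨z, hz, rfl⟩ := hb
      exact hspec z (hfin.mem_toFinset.mp hz)
    calc spectralRadius ℂ M ≤ ((F.sup id : ℝ≥0) : ℝ≥0∞) := by
          rw [spectralRadius]
          apply iSup₂_le
          intro z hz
          exact_mod_cast ENNReal.coe_le_coe.mpr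
            (Finset.le_sup (f := id) (Finset.mem_image_of_mem _ (hfin.mem_toFinset.mpr hz)))
      _ < 1 := by exact_mod_cast hr1
  -- Gelfand
  obtain ⟨c, hc1, hc2⟩ := exists_between hrad
  lift c to ℝ≥0 using (hc2.trans (by norm_num)).ne
  have hgel := spectrum.pow_nnnorm_pow_one_div_tendsto_nhds_spectralRadius M
  have hev : ∀ᶠ n : ℕ in atTop, (‖M ^ n‖₊ : ℝ≥0∞) ^ (1 / (n:ℝ)) < (c : ℝ≥0∞) :=
    hgel.eventually_lt_const hc1
  have hev2 : ∀ᶠ n : ℕ in atTop, ‖M ^ n‖ ≤ (c:ℝ) ^ n := by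
    filter_upwards [hev, Filter.eventually_ge_atTop 1] with n hn hn1
    have hnne : (n:ℝ) ≠ 0 := Nat.cast_ne_zero.mpr (by omega)
    have h0 : ((‖M ^ n‖₊ : ℝ≥0∞) ^ (1/(n:ℝ))) ^ ((n:ℕ):ℝ) < (c:ℝ≥0∞) ^ ((n:ℕ):ℝ) :=
      ENNReal.rpow_lt_rpow hn (by positivity)
    rw [← ENNReal.rpow_mul, one_div, inv_mul_cancel₀ hnne, ENNReal.rpow_one,
      ENNReal.rpow_natCast, ← ENNReal.coe_pow, ENNReal.coe_lt_coe] at h0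
    have h1 := h0.le
    rw [← NNReal.coe_le_coe, NNReal.coe_pow] at h1
    simpa using h1
  have hc3 : (c:ℝ) < 1 := by exact_mod_cast hc2
  apply tendsto_of_tendsto_of_tendsto_of_le_of_le' tendsto_const_nhds
    (tendsto_pow_atTop_nhds_zero_of_lt_one c.coe_nonneg hc3)
  · filter_upwards with n using norm_nonneg _
  · exact hev2

lemma mulVec_pow_inv_tendsto (d : ℕ) (A : Matrix (Fin d) (Fin d) ℝ) (hA : IsUnit A.det)
    (hexp : ∀ z : ℂ, (A.map (Complex.ofReal)).charpoly.IsRoot z → 1 < ‖z‖)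
    (w : Fin d → ℝ) :
    Filter.Tendsto (fun n : ℕ => ‖((A⁻¹) ^ n) *ᵥ w‖) atTop (𝓝 0) := by
  have hnorm := norm_pow_inv_tendsto d A hA hexp
  set Ac := A.map Complex.ofReal with hAc
  have hco : ⇑Complex.ofRealHom = Complex.ofReal := rfl
  have hinvmap : Ac⁻¹ = (A⁻¹).map Complex.ofReal := by
    apply Matrix.inv_eq_right_inv
    rw [hAc, ← hco, ← Matrix.map_mul, Matrix.mul_nonsing_inv A hA]
    simp
  have hkey : ∀ n : ℕ, ‖((A⁻¹) ^ n) *ᵥ w‖ = ‖(Ac⁻¹ ^ n) *ᵥ (fun i => (w i : ℂ))‖ := by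
    intro n
    have hpow : Ac⁻¹ ^ n = ((A⁻¹) ^ n).map Complex.ofReal := by
      rw [hinvmap, ← hco, ← RingHom.mapMatrix_apply, ← RingHom.mapMatrix_apply, ← map_pow]
    rw [hpow]
    have hmv : (((A⁻¹) ^ n).map Complex.ofReal) *ᵥ (fun i => (w i : ℂ))
        = fun i => ((((A⁻¹) ^ n) *ᵥ w) i : ℂ) := by
      funext i
      simp [Matrix.mulVec, dotProduct]
    rw [hmv, Pi.norm_def, Pi.norm_def]
    congr 1
    apply Finset.sup_congr rfl
    intro i _
    simp
  simp only [hkey]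
  have hb : ∀ n : ℕ, ‖(Ac⁻¹ ^ n) *ᵥ (fun i => (w i : ℂ))‖
      ≤ ‖Ac⁻¹ ^ n‖ * ‖(fun i => (w i : ℂ))‖ := fun n => Matrix.linfty_opNorm_mulVec _ _
  have h0 := hnorm.mul_const ‖(fun i => (w i : ℂ))‖
  rw [zero_mul] at h0
  apply tendsto_of_tendsto_of_tendsto_of_le_of_le' tendsto_const_nhds h0
  · filter_upwards with n using norm_nonneg _
  · filter_upwards with n using hb n


section B
variable {d : ℕ}

local notation "E" => (Fin d → ℝ)

lemma integrable_of_bdd {α : Type*} [MeasurableSpace α] [TopologicalSpace α]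
    [OpensMeasurableSpace α] {ν : Measure α} [IsFiniteMeasure ν] {f : α → ℝ} {C : ℝ}
    (hf : Continuous f) (hC : ∀ x, |f x| ≤ C) : Integrable f ν :=
  (integrable_const C).mono' hf.aestronglyMeasurable
    (Filter.Eventually.of_forall fun x => by simpa using hC x)

lemma mulVec_continuous' (M : Matrix (Fin d) (Fin d) ℝ) :
    Continuous (fun v : E => M *ᵥ v) := by
  exact Continuous.matrix_mulVec continuous_const continuous_id

lemma tau_continuous (A : Matrix (Fin d) (Fin d) ℝ) (b : E) :
    Continuous (fun x : E => A⁻¹ *ᵥ (x + b)) :=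
  (mulVec_continuous' A⁻¹).comp (continuous_id.add continuous_const)

lemma expansion (A : Matrix (Fin d) (Fin d) ℝ) (B : Finset E) (p : E → ℝ)
    (hp : ∀ b ∈ B, 0 < p b)
    (ν : Measure E) [IsProbabilityMeasure ν]
    (hinv : ν = ∑ b ∈ B, ENNReal.ofReal (p b) • ν.map (fun x => A⁻¹ *ᵥ (x + b)))
    {f : E → ℝ} {C : ℝ} (hf : Continuous f) (hC : ∀ x, |f x| ≤ C) :
    ∫ x, f x ∂ν = ∑ b ∈ B, p b * ∫ x, f (A⁻¹ *ᵥ (x + b)) ∂ν := by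
  conv_lhs => rw [hinv]
  rw [integral_finset_sum_measure]
  · apply Finset.sum_congr rfl
    intro b hb
    rw [integral_smul_measure, integral_map ((tau_continuous A b).measurable).aemeasurable
      hf.aestronglyMeasurable, ENNReal.toReal_ofReal (hp b hb).le, smul_eq_mul]
  · intro b hb
    apply Integrable.smul_measure
    · exact integrable_of_bdd (ν := ν.map (fun x => A⁻¹ *ᵥ (x + b))) hf hC
    · exact ENNReal.ofReal_ne_top

end B

section C
variable {d : ℕ}
local notation "E" => (Fin d → ℝ)

lemma D_eq_prod (ν₁ ν₂ : Measure E) [IsProbabilityMeasure ν₁] [IsProbabilityMeasure ν₂]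
    {f : E → ℝ} {C : ℝ} (hf : Continuous f) (hC : ∀ x, |f x| ≤ C) :
    ∫ x, f x ∂ν₁ - ∫ x, f x ∂ν₂ = ∫ q : E × E, (f q.1 - f q.2) ∂(ν₁.prod ν₂) := by
  have h1 : ∫ q : E × E, f q.1 ∂(ν₁.prod ν₂) = ∫ x, f x ∂ν₁ := by
    rw [← integral_map measurable_fst.aemeasurable hf.aestronglyMeasurable,
      Measure.map_fst_prod, measure_univ, one_smul]
  have h2 : ∫ q : E × E, f q.2 ∂(ν₁.prod ν₂) = ∫ x, f x ∂ν₂ := by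
    rw [← integral_map measurable_snd.aemeasurable hf.aestronglyMeasurable,
      Measure.map_snd_prod, measure_univ, one_smul]
  rw [← h1, ← h2, integral_sub]
  · exact integrable_of_bdd (hf.comp continuous_fst) (fun q : E × E => hC q.1)
  · exact integrable_of_bdd (hf.comp continuous_snd) (fun q : E × E => hC q.2)

lemma est (A : Matrix (Fin d) (Fin d) ℝ) (B : Finset E) (p : E → ℝ)
    (hp : ∀ b ∈ B, 0 < p b) (hsum : ∑ b ∈ B, p b = 1)
    (ν₁ ν₂ : Measure E) [IsProbabilityMeasure ν₁] [IsProbabilityMeasure ν₂]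
    (h₁ : ν₁ = ∑ b ∈ B, ENNReal.ofReal (p b) • ν₁.map (fun x => A⁻¹ *ᵥ (x + b)))
    (h₂ : ν₂ = ∑ b ∈ B, ENNReal.ofReal (p b) • ν₂.map (fun x => A⁻¹ *ᵥ (x + b))) :
    ∀ (n : ℕ) (f ω : E → ℝ) (C : ℝ), Continuous f → (∀ x, |f x| ≤ C) →
    Continuous ω → (∀ v, 0 ≤ ω v) → (∀ x y, |f x - f y| ≤ ω (x - y)) →
    |∫ x, f x ∂ν₁ - ∫ x, f x ∂ν₂|
      ≤ ∫ q : E × E, min (2*C) (ω (((A⁻¹)^n) *ᵥ (q.1 - q.2))) ∂(ν₁.prod ν₂) := by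
  intro n
  induction n with
  | zero =>
    intro f ω C hf hC hω hω0 hLip
    rw [D_eq_prod ν₁ ν₂ hf hC]
    have hcont : Continuous (fun q : E × E => min (2*C) (ω (((A⁻¹)^0) *ᵥ (q.1 - q.2)))) :=
      continuous_const.min (hω.comp ((mulVec_continuous' ((A⁻¹)^0)).comp
        (continuous_fst.sub continuous_snd)))
    have key : ∀ q : E × E, |f q.1 - f q.2| ≤ min (2*C) (ω (((A⁻¹)^0) *ᵥ (q.1 - q.2))) := by
      intro q
      apply le_min
      · calc |f q.1 - f q.2| ≤ |f q.1| + |f q.2| := abs_sub _ _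
          _ ≤ 2*C := by have := hC q.1; have := hC q.2; linarith
      · rw [pow_zero, Matrix.one_mulVec]
        exact hLip q.1 q.2
    have hC0 : 0 ≤ C := le_trans (abs_nonneg _) (hC 0)
    calc |∫ q : E × E, (f q.1 - f q.2) ∂(ν₁.prod ν₂)|
        ≤ ∫ q : E × E, |f q.1 - f q.2| ∂(ν₁.prod ν₂) := by
          simpa [Real.norm_eq_abs] using
            norm_integral_le_integral_norm (fun q : E × E => f q.1 - f q.2) (μ := ν₁.prod ν₂)
      _ ≤ _ := by
          apply integral_mono
          · exact (integrable_of_bdd ((hf.comp continuous_fst).sub (hf.comp continuous_snd))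
              (fun q : E × E => (key q).trans (min_le_left _ _))).abs
          · apply integrable_of_bdd hcont
            intro q
            rw [abs_of_nonneg (le_min (by linarith) (hω0 _))]
            exact min_le_left _ _
          · exact key
  | succ n ih =>
    intro f ω C hf hC hω hω0 hLip
    -- expand both integrals one step
    rw [expansion A B p hp ν₁ h₁ hf hC, expansion A B p hp ν₂ h₂ hf hC, ← Finset.sum_sub_distrib]
    have hterm : ∀ b ∈ B,
        |p b * ∫ x, f (A⁻¹ *ᵥ (x + b)) ∂ν₁ - p b * ∫ x, f (A⁻¹ *ᵥ (x + b)) ∂ν₂|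
        ≤ p b * ∫ q : E × E, min (2*C) (ω (((A⁻¹)^(n+1)) *ᵥ (q.1 - q.2))) ∂(ν₁.prod ν₂) := by
      intro b hb
      rw [← mul_sub, abs_mul, abs_of_pos (hp b hb)]
      apply mul_le_mul_of_nonneg_left _ (hp b hb).le
      have hIH := ih (fun x => f (A⁻¹ *ᵥ (x + b))) (fun v => ω (A⁻¹ *ᵥ v)) C
        (hf.comp (tau_continuous A b)) (fun x => hC _)
        (hω.comp (mulVec_continuous' A⁻¹)) (fun v => hω0 _) ?_
      · calc _ ≤ _ := hIH
          _ = _ := by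
            congr 1
            funext q
            simp only [Matrix.mulVec_mulVec, ← pow_succ']
      · intro x y
        have hxy : A⁻¹ *ᵥ (x + b) - A⁻¹ *ᵥ (y + b) = A⁻¹ *ᵥ (x - y) := by
          rw [← Matrix.mulVec_sub]
          congr 1
          abel
        calc |f (A⁻¹ *ᵥ (x + b)) - f (A⁻¹ *ᵥ (y + b))|
            ≤ ω (A⁻¹ *ᵥ (x + b) - A⁻¹ *ᵥ (y + b)) := hLip _ _
          _ = ω (A⁻¹ *ᵥ (x - y)) := by rw [hxy]
    calc |∑ b ∈ B, (p b * ∫ x, f (A⁻¹ *ᵥ (x + b)) ∂ν₁ - p b * ∫ x, f (A⁻¹ *ᵥ (x + b)) ∂ν₂)|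
        ≤ ∑ b ∈ B, |p b * ∫ x, f (A⁻¹ *ᵥ (x + b)) ∂ν₁ - p b * ∫ x, f (A⁻¹ *ᵥ (x + b)) ∂ν₂| :=
          Finset.abs_sum_le_sum_abs _ _
      _ ≤ ∑ b ∈ B, p b * ∫ q : E × E, min (2*C) (ω (((A⁻¹)^(n+1)) *ᵥ (q.1 - q.2))) ∂(ν₁.prod ν₂) :=
          Finset.sum_le_sum hterm
      _ = _ := by rw [← Finset.sum_mul, hsum, one_mul]

end C

section D
variable {d : ℕ}
local notation "E" => (Fin d → ℝ)

lemma integral_eq_of_lipschitz (A : Matrix (Fin d) (Fin d) ℝ)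
    (hten : ∀ w : E, Filter.Tendsto (fun n : ℕ => ‖((A⁻¹) ^ n) *ᵥ w‖) atTop (𝓝 0))
    (B : Finset E) (p : E → ℝ)
    (hp : ∀ b ∈ B, 0 < p b) (hsum : ∑ b ∈ B, p b = 1)
    (ν₁ ν₂ : Measure E) [IsProbabilityMeasure ν₁] [IsProbabilityMeasure ν₂]
    (h₁ : ν₁ = ∑ b ∈ B, ENNReal.ofReal (p b) • ν₁.map (fun x => A⁻¹ *ᵥ (x + b)))
    (h₂ : ν₂ = ∑ b ∈ B, ENNReal.ofReal (p b) • ν₂.map (fun x => A⁻¹ *ᵥ (x + b)))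
    (f : E → ℝ) (C L : ℝ) (hf : Continuous f) (hC : ∀ x, |f x| ≤ C) (hL : 0 ≤ L)
    (hLip : ∀ x y, |f x - f y| ≤ L * ‖x - y‖) :
    ∫ x, f x ∂ν₁ = ∫ x, f x ∂ν₂ := by
  have hC0 : 0 ≤ C := le_trans (abs_nonneg _) (hC 0)
  have hest := est A B p hp hsum ν₁ ν₂ h₁ h₂
  have hbd : ∀ n : ℕ, |∫ x, f x ∂ν₁ - ∫ x, f x ∂ν₂|
      ≤ ∫ q : E × E, min (2*C) (L * ‖((A⁻¹)^n) *ᵥ (q.1 - q.2)‖) ∂(ν₁.prod ν₂) := by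
    intro n
    exact hest n f (fun v => L * ‖v‖) C hf hC (continuous_const.mul continuous_norm)
      (fun v => by positivity) hLip
  have hlim : Filter.Tendsto
      (fun n : ℕ => ∫ q : E × E, min (2*C) (L * ‖((A⁻¹)^n) *ᵥ (q.1 - q.2)‖) ∂(ν₁.prod ν₂))
      atTop (𝓝 0) := by
    have h0 : (0:ℝ) = ∫ _q : E × E, (0:ℝ) ∂(ν₁.prod ν₂) := by simp
    rw [h0]
    apply tendsto_integral_of_dominated_convergence (fun _ => 2*C)
    · intro n
      exact (continuous_const.min (continuous_const.mul ((mulVec_continuous' ((A⁻¹)^n)).comp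
        (continuous_fst.sub continuous_snd)).norm)).aestronglyMeasurable
    · exact integrable_const _
    · intro n
      filter_upwards with q
      rw [Real.norm_eq_abs, abs_of_nonneg (le_min (by linarith) (by positivity))]
      exact min_le_left _ _
    · filter_upwards with q
      have hmv := hten (q.1 - q.2)
      have hcont : Filter.Tendsto (fun t : ℝ => min (2*C) (L * t)) (𝓝 0) (𝓝 0) := by
        have hc : Continuous (fun t : ℝ => min (2*C) (L * t)) :=
          continuous_const.min (continuous_const.mul continuous_id)
        have := hc.tendsto (0:ℝ)
        simpa [mul_zero, min_eq_right (by linarith : (0:ℝ) ≤ 2*C)] using this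
      exact hcont.comp hmv
  have habs : |∫ x, f x ∂ν₁ - ∫ x, f x ∂ν₂| ≤ 0 :=
    ge_of_tendsto hlim (Filter.Eventually.of_forall hbd)
  have := abs_nonneg (∫ x, f x ∂ν₁ - ∫ x, f x ∂ν₂)
  have : |∫ x, f x ∂ν₁ - ∫ x, f x ∂ν₂| = 0 := le_antisymm habs this
  linarith [abs_eq_zero.mp this, sub_eq_zero.mp (abs_eq_zero.mp this)]

end D

section U
variable {d : ℕ}
local notation "E" => (Fin d → ℝ)

lemma fixed_unique (A : Matrix (Fin d) (Fin d) ℝ)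
    (hten : ∀ w : E, Filter.Tendsto (fun n : ℕ => ‖((A⁻¹) ^ n) *ᵥ w‖) atTop (𝓝 0))
    (B : Finset E) (p : E → ℝ)
    (hp : ∀ b ∈ B, 0 < p b) (hsum : ∑ b ∈ B, p b = 1)
    (ν₁ ν₂ : Measure E) [IsProbabilityMeasure ν₁] [IsProbabilityMeasure ν₂]
    (h₁ : ν₁ = ∑ b ∈ B, ENNReal.ofReal (p b) • ν₁.map (fun x => A⁻¹ *ᵥ (x + b)))
    (h₂ : ν₂ = ∑ b ∈ B, ENNReal.ofReal (p b) • ν₂.map (fun x => A⁻¹ *ᵥ (x + b))) :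
    ν₁ = ν₂ := by
  have key : ∀ F : Set E, IsClosed F → ν₁ F = ν₂ F := by
    intro F hF
    rcases F.eq_empty_or_nonempty with rfl | hne
    · simp
    set g : ℕ → E → ℝ := fun n x => max (1 - n * Metric.infDist x F) 0 with hg
    have hgc : ∀ n, Continuous (g n) := fun n =>
      (continuous_const.sub (continuous_const.mul (Metric.continuous_infDist_pt F))).max
        continuous_const
    have hgb : ∀ n (x : E), |g n x| ≤ 1 := by
      intro n x
      rw [abs_of_nonneg (le_max_right _ _)]
      apply max_le _ zero_le_one
      have : 0 ≤ (n:ℝ) * Metric.infDist x F :=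
        mul_nonneg (Nat.cast_nonneg n) Metric.infDist_nonneg
      linarith
    have hglip : ∀ n (x y : E), |g n x - g n y| ≤ (n:ℝ) * ‖x - y‖ := by
      intro n x y
      calc |g n x - g n y|
          ≤ |(1 - n * Metric.infDist x F) - (1 - n * Metric.infDist y F)| :=
            abs_max_sub_max_le_abs _ _ _
        _ = (n:ℝ) * |Metric.infDist x F - Metric.infDist y F| := by
            have e : (1 - (n:ℝ) * Metric.infDist x F) - (1 - (n:ℝ) * Metric.infDist y F)
                = (n:ℝ) * (Metric.infDist y F - Metric.infDist x F) := by ring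
            rw [e, abs_mul, abs_of_nonneg (Nat.cast_nonneg (α := ℝ) n), abs_sub_comm]
        _ ≤ (n:ℝ) * ‖x - y‖ := by
            apply mul_le_mul_of_nonneg_left _ (Nat.cast_nonneg n)
            have := (Metric.lipschitz_infDist_pt F).dist_le_mul x y
            simpa [Real.dist_eq, dist_eq_norm] using this
    have hint : ∀ n, ∫ x, g n x ∂ν₁ = ∫ x, g n x ∂ν₂ := fun n =>
      integral_eq_of_lipschitz A hten B p hp hsum ν₁ ν₂ h₁ h₂ (g n) 1 n (hgc n) (hgb n)
        (Nat.cast_nonneg n) (hglip n)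
    have hptw : ∀ x : E, Filter.Tendsto (fun n => g n x) atTop
        (𝓝 (F.indicator (fun _ => (1:ℝ)) x)) := by
      intro x
      by_cases hx : x ∈ F
      · have : ∀ n, g n x = 1 := by
          intro n
          rw [hg]
          simp [Metric.infDist_zero_of_mem hx]
        rw [Set.indicator_of_mem hx]
        simp only [this]
        exact tendsto_const_nhds
      · have hd : 0 < Metric.infDist x F := (hF.notMem_iff_infDist_pos hne).mp hx
        rw [Set.indicator_of_notMem hx]
        apply Filter.Tendsto.congr' _ (tendsto_const_nhds (x := (0:ℝ)))
        filter_upwards [Filter.eventually_ge_atTop ⌈(Metric.infDist x F)⁻¹⌉₊] with n hn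
        have h1 : (Metric.infDist x F)⁻¹ ≤ (n:ℝ) :=
          le_trans (Nat.le_ceil _) (Nat.cast_le.mpr hn)
        have h2 : 1 ≤ (n:ℝ) * Metric.infDist x F := by
          rw [inv_le_iff_one_le_mul₀ hd] at h1
          linarith [h1]
        rw [hg]
        simp only
        rw [max_eq_right (by linarith)]
    have hlim : ∀ (ν : Measure E) [IsProbabilityMeasure ν],
        Filter.Tendsto (fun n => ∫ x, g n x ∂ν) atTop (𝓝 ((ν F).toReal)) := by
      intro ν _
      have hind : ∫ x, F.indicator (fun _ => (1:ℝ)) x ∂ν = (ν F).toReal := by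
        rw [integral_indicator_const (1:ℝ) hF.measurableSet]
        simp [measureReal_def]
      rw [← hind]
      apply tendsto_integral_of_dominated_convergence (fun _ => (1:ℝ))
      · exact fun n => (hgc n).aestronglyMeasurable
      · exact integrable_const _
      · intro n
        filter_upwards with x
        rw [Real.norm_eq_abs]
        exact hgb n x
      · filter_upwards with x using hptw x
    have := tendsto_nhds_unique ((hlim ν₁).congr (fun n => hint n)) (hlim ν₂)
    exact (ENNReal.toReal_eq_toReal_iff' (measure_ne_top ν₁ F) (measure_ne_top ν₂ F)).mp this
  apply MeasureTheory.ext_of_generate_finite {s : Set E | IsClosed s} ?_ isPiSystem_isClosed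
    (fun s hs => key s hs) (by rw [key _ isClosed_univ])
  rw [BorelSpace.measurable_eq (α := E), borel_eq_generateFrom_isClosed]

end U

section M
variable {d : ℕ}
local notation "E" => (Fin d → ℝ)

lemma hvolmap (M : Matrix (Fin d) (Fin d) ℝ) (hM : IsUnit M.det) (c : E) :
    volume.map (fun x : E => M *ᵥ (x + c))
      = ENNReal.ofReal |M.det|⁻¹ • volume := by
  have hmeas1 : Measurable (fun x : E => x + c) :=
    (continuous_id.add continuous_const).measurable
  have hmeas2 : Measurable (fun v : E => M *ᵥ v) := (mulVec_continuous' M).measurable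
  have hcomp : (fun x : E => M *ᵥ (x + c)) = (fun v => M *ᵥ v) ∘ (fun x => x + c) := rfl
  rw [hcomp, ← Measure.map_map hmeas2 hmeas1, map_add_right_eq_self volume c]
  have hdet : LinearMap.det (Matrix.toLin' M) ≠ 0 := by
    rw [LinearMap.det_toLin']
    exact hM.ne_zero
  have h := Real.map_linearMap_volume_pi_eq_smul_volume_pi hdet
  have hfun : ⇑(Matrix.toLin' M) = fun v => M *ᵥ v := funext fun v => Matrix.toLin'_apply M v
  rw [hfun, LinearMap.det_toLin'] at h
  rw [h, abs_inv]

theorem hutchinson_measure_dichotomy' (A : Matrix (Fin d) (Fin d) ℝ) (hA : IsUnit A.det)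
    (hten : ∀ w : E, Filter.Tendsto (fun n : ℕ => ‖((A⁻¹) ^ n) *ᵥ w‖) atTop (𝓝 0))
    (B : Finset E) (p : E → ℝ)
    (hp : ∀ b ∈ B, 0 < p b) (hsum : ∑ b ∈ B, p b = 1)
    (μ : Measure E) [IsProbabilityMeasure μ]
    (hinv : μ = ∑ b ∈ B, ENNReal.ofReal (p b) • μ.map (fun x => A⁻¹ *ᵥ (x + b))) :
    volume.withDensity (μ.rnDeriv volume) = 0 ∨ μ.singularPart volume = 0 := by
  classical
  by_contra hcon
  push_neg at hcon
  obtain ⟨hane, hsne⟩ := hcon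
  have hAinv : IsUnit (A⁻¹).det := A.isUnit_nonsing_inv_det hA
  have hmeasτ : ∀ b : E, Measurable (fun x : E => A⁻¹ *ᵥ (x + b)) :=
    fun b => (tau_continuous A b).measurable
  -- absolute continuity is preserved
  have habs : ∀ (b : E) (ν : Measure E), ν ≪ volume →
      ν.map (fun x => A⁻¹ *ᵥ (x + b)) ≪ volume := by
    intro b ν hν
    refine (hν.map (hmeasτ b)).trans ?_
    rw [hvolmap A⁻¹ hAinv b]
    exact Measure.smul_absolutelyContinuous
  -- singularity is preserved
  have hsing : ∀ (b : E) (ν : Measure E), ν ⟂ₘ volume →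
      ν.map (fun x => A⁻¹ *ᵥ (x + b)) ⟂ₘ volume := by
    intro b ν hν
    obtain ⟨S, hSm, hS1, hS2⟩ := hν
    set c : E := -(A⁻¹ *ᵥ b) with hc
    set σ : E → E := fun y => A *ᵥ (y + c) with hσ
    have hσmeas : Measurable σ :=
      ((mulVec_continuous' A).comp (continuous_id.add continuous_const)).measurable
    have hστ : ∀ x : E, σ (A⁻¹ *ᵥ (x + b)) = x := by
      intro x
      rw [hσ]
      simp only [Matrix.mulVec_add, Matrix.mulVec_mulVec, Matrix.mul_nonsing_inv A hA,
        Matrix.one_mulVec, hc]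
      simp [Matrix.mulVec_neg, Matrix.mulVec_mulVec, Matrix.mul_nonsing_inv A hA,
        Matrix.one_mulVec]
    refine ⟨σ ⁻¹' S, hσmeas hSm, ?_, ?_⟩
    · rw [Measure.map_apply (hmeasτ b) (hσmeas hSm)]
      have hpre : (fun x : E => A⁻¹ *ᵥ (x + b)) ⁻¹' (σ ⁻¹' S) = S := by
        ext x
        simp [Set.mem_preimage, hστ x]
      rw [hpre, hS1]
    · have hcompl : (σ ⁻¹' S)ᶜ = σ ⁻¹' Sᶜ := rfl
      rw [hcompl, ← Measure.map_apply hσmeas hSm.compl, hvolmap A hA c]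
      simp [hS2]
  -- the Hutchinson operator
  set H : Measure E → Measure E :=
    fun ν => ∑ b ∈ B, ENNReal.ofReal (p b) • ν.map (fun x => A⁻¹ *ᵥ (x + b)) with hHdef
  set μs := μ.singularPart volume with hμs
  set μa := volume.withDensity (μ.rnDeriv volume) with hμa
  have hdecomp : μs + μa = μ := Measure.singularPart_add_rnDeriv μ volume
  have hH : H μs + H μa = μ := by
    rw [hHdef]
    simp only
    rw [← Finset.sum_add_distrib]
    conv_rhs => rw [hinv]
    apply Finset.sum_congr rfl
    intro b _
    rw [← smul_add, ← Measure.map_add _ _ (hmeasτ b), hdecomp]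
  have hμs_sing : μs ⟂ₘ volume := Measure.mutuallySingular_singularPart μ volume
  have hμa_ac : μa ≪ volume := withDensity_absolutelyContinuous volume _
  have hHs_sing : H μs ⟂ₘ volume := by
    rw [hHdef]
    simp only
    apply Finset.sum_induction _ (fun m : Measure E => m ⟂ₘ volume)
      (fun m₁ m₂ h1 h2 => h1.add_left h2) (MeasureTheory.Measure.MutuallySingular.zero_left)
    intro b _
    exact (hsing b μs hμs_sing).smul _
  have hHa_ac : H μa ≪ volume := by
    rw [hHdef]
    simp only
    refine Measure.AbsolutelyContinuous.mk fun S hSm hS0 => ?_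
    rw [Measure.finset_sum_apply]
    apply Finset.sum_eq_zero
    intro b hb
    rw [Measure.smul_apply, (habs b μa hμa_ac) hS0]
    simp
  haveI : IsFiniteMeasure (H μa) := isFiniteMeasure_of_le μ (by rw [← hH]; exact Measure.le_add_left (le_refl _))
  have hwd : H μa = volume.withDensity ((H μa).rnDeriv volume) :=
    (Measure.withDensity_rnDeriv_eq _ _ hHa_ac).symm
  have hadd : μ = H μs + volume.withDensity ((H μa).rnDeriv volume) := by
    rw [← hwd, hH]
  have hseq : H μs = μs := by
    have h := Measure.eq_singularPart (Measure.measurable_rnDeriv (H μa) volume) hHs_sing hadd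
    rw [← hμs] at h
    exact h
  have haeq : H μa = μa := by
    have h := Measure.eq_withDensity_rnDeriv (Measure.measurable_rnDeriv (H μa) volume)
      hHs_sing hadd
    rw [← hμa] at h
    rw [hwd, h]
  -- masses
  have hmass : μs Set.univ + μa Set.univ = 1 := by
    rw [← Measure.add_apply, hdecomp]
    exact measure_univ
  have ha0 : μa Set.univ ≠ 0 := fun h => hane (Measure.measure_univ_eq_zero.mp h)
  have hs0 : μs Set.univ ≠ 0 := fun h => hsne (Measure.measure_univ_eq_zero.mp h)
  have hatop : μa Set.univ ≠ ⊤ := by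
    intro h
    rw [h] at hmass
    simp at hmass
  have hstop : μs Set.univ ≠ ⊤ := by
    intro h
    rw [h] at hmass
    simp [ENNReal.add_eq_top] at hmass
  set ν₁ : Measure E := (μa Set.univ)⁻¹ • μa with hν₁
  set ν₂ : Measure E := (μs Set.univ)⁻¹ • μs with hν₂
  haveI hpν₁ : IsProbabilityMeasure ν₁ := by
    constructor
    rw [hν₁, Measure.smul_apply, smul_eq_mul, ENNReal.inv_mul_cancel ha0 hatop]
  haveI hpν₂ : IsProbabilityMeasure ν₂ := by
    constructor
    rw [hν₂, Measure.smul_apply, smul_eq_mul, ENNReal.inv_mul_cancel hs0 hstop]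
  have hfix : ∀ (ρ : Measure E) (c : ℝ≥0∞), H ρ = ρ →
      c • ρ = ∑ b ∈ B, ENNReal.ofReal (p b) • (c • ρ).map (fun x => A⁻¹ *ᵥ (x + b)) := by
    intro ρ c hρ
    conv_lhs => rw [← hρ]
    rw [hHdef]
    simp only
    rw [Finset.smul_sum]
    apply Finset.sum_congr rfl
    intro b _
    rw [Measure.map_smul, smul_comm]
  have he₁ : ν₁ = ∑ b ∈ B, ENNReal.ofReal (p b) • ν₁.map (fun x => A⁻¹ *ᵥ (x + b)) :=
    hfix μa _ haeq
  have he₂ : ν₂ = ∑ b ∈ B, ENNReal.ofReal (p b) • ν₂.map (fun x => A⁻¹ *ᵥ (x + b)) :=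
    hfix μs _ hseq
  have huniq : ν₁ = ν₂ := fixed_unique A hten B p hp hsum ν₁ ν₂ he₁ he₂
  -- contradiction
  have hν₁_ac : ν₁ ≪ volume := hμa_ac.smul_left _
  have hν₂_sing : ν₂ ⟂ₘ volume := hμs_sing.smul _
  rw [← huniq] at hν₂_sing
  obtain ⟨S, hSm, h1, h2⟩ := hν₂_sing
  have h3 : ν₁ Sᶜ = 0 := hν₁_ac h2
  have : (1 : ℝ≥0∞) ≤ 0 := by
    calc (1 : ℝ≥0∞) = ν₁ Set.univ := measure_univ.symm
      _ ≤ ν₁ S + ν₁ Sᶜ := by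
          rw [← Set.union_compl_self S]
          exact measure_union_le _ _
      _ = 0 := by rw [h1, h3, add_zero]
  simp at this

end M

open MeasureTheory Finset Matrix in
/-- dichotomy: The invariant (Hutchinson) probability
measure μ of an affine IFS τ_b(x) = A⁻¹(x+b) (A invertible expansive,
B finite, weights p_b > 0 summing to 1) is either purely singular or
absolutely continuous: in its Lebesgue decomposition μ = μ_ac + μ_s,
either μ_ac = 0 or μ_s = 0. -/
theorem hutchinson_measure_dichotomy (d : ℕ)
    (A : Matrix (Fin d) (Fin d) ℝ) (hA : IsUnit A.det)
    (hexp : ∀ z : ℂ, (A.map (Complex.ofReal)).charpoly.IsRoot z → 1 < ‖z‖)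
    (B : Finset (Fin d → ℝ)) (p : (Fin d → ℝ) → ℝ)
    (hp : ∀ b ∈ B, 0 < p b) (hsum : ∑ b ∈ B, p b = 1)
    (μ : Measure (Fin d → ℝ)) [IsProbabilityMeasure μ]
    (hinv : μ = ∑ b ∈ B, ENNReal.ofReal (p b) • μ.map (fun x => A⁻¹ *ᵥ (x + b))) :
    volume.withDensity (μ.rnDeriv volume) = 0 ∨ μ.singularPart volume = 0 :=
  hutchinson_measure_dichotomy' A hA (mulVec_pow_inv_tendsto d A hA hexp) B p hp hsum μ hinv
end

section
/- Let α > 1 be a Pisot number, λ = 1/α, μ_λ the infinite Bernoulli convolution with μ̂_λ(ξ) = ∏_{n≥1} cos(2πλⁿξ), and C > 0 a constant with |μ̂_λ(α^k)| > C for all k ≥ 0. Then for all n ∈ ℕ, ‖μ_λ − T_{λⁿ/2} μ_λ‖ ≥ 2C, where T_t denotes translation by t and ‖·‖ is total variation norm. -/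
open MeasureTheory in
lemma tv_bound (μ ν : Measure ℝ) [IsFiniteMeasure μ] [IsFiniteMeasure ν]
    (f : ℝ → ℂ) (hf : Continuous f) (hbd : ∀ x, ‖f x‖ ≤ 1) :
    ‖∫ x, f x ∂μ - ∫ x, f x ∂ν‖ ≤
      (((μ.toSignedMeasure - ν.toSignedMeasure).totalVariation) Set.univ).toReal := by
  set s := μ.toSignedMeasure - ν.toSignedMeasure with hs
  set p := s.toJordanDecomposition.posPart with hp
  set q := s.toJordanDecomposition.negPart with hq
  have hpn : μ + q = ν + p := by
    ext A hA
    have h1 : s A = (p A).toReal - (q A).toReal := by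
      conv_lhs => rw [← s.toSignedMeasure_toJordanDecomposition]
      rw [JordanDecomposition.toSignedMeasure, VectorMeasure.sub_apply,
        Measure.toSignedMeasure_apply_measurable hA,
        Measure.toSignedMeasure_apply_measurable hA]
      rfl
    have h2 : s A = (μ A).toReal - (ν A).toReal := by
      rw [hs, VectorMeasure.sub_apply, Measure.toSignedMeasure_apply_measurable hA,
        Measure.toSignedMeasure_apply_measurable hA]
      rfl
    have key : (μ A).toReal + (q A).toReal = (ν A).toReal + (p A).toReal := by
      rw [h1] at h2; linarith
    rw [Measure.add_apply, Measure.add_apply,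
      ← ENNReal.toReal_eq_toReal_iff' (by finiteness) (by finiteness),
      ENNReal.toReal_add (by finiteness) (by finiteness),
      ENNReal.toReal_add (by finiteness) (by finiteness)]
    exact key
  have hint : ∀ (m : Measure ℝ) [IsFiniteMeasure m], Integrable f m := fun m _ =>
    (integrable_const (1 : ℝ)).mono' hf.aestronglyMeasurable
      (Filter.Eventually.of_forall hbd)
  have hsum : ∫ x, f x ∂μ + ∫ x, f x ∂q = ∫ x, f x ∂ν + ∫ x, f x ∂p := by
    rw [← integral_add_measure (hint μ) (hint q), ← integral_add_measure (hint ν) (hint p), hpn]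
  have hdiff : ∫ x, f x ∂μ - ∫ x, f x ∂ν = ∫ x, f x ∂p - ∫ x, f x ∂q := by
    linear_combination hsum
  have hb : ∀ (m : Measure ℝ) [IsFiniteMeasure m], ‖∫ x, f x ∂m‖ ≤ (m Set.univ).toReal := by
    intro m _
    calc ‖∫ x, f x ∂m‖ ≤ ∫ x, (1:ℝ) ∂m :=
          norm_integral_le_of_norm_le (integrable_const 1) (Filter.Eventually.of_forall hbd)
      _ = (m Set.univ).toReal := by simp; rfl
  rw [hdiff]
  have : (s.totalVariation Set.univ).toReal = (p Set.univ).toReal + (q Set.univ).toReal := by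
    rw [SignedMeasure.totalVariation, Measure.add_apply,
      ENNReal.toReal_add (by finiteness) (by finiteness)]
  rw [this]
  calc ‖∫ x, f x ∂p - ∫ x, f x ∂q‖ ≤ ‖∫ x, f x ∂p‖ + ‖∫ x, f x ∂q‖ := norm_sub_le _ _
    _ ≤ (p Set.univ).toReal + (q Set.univ).toReal := add_le_add (hb p) (hb q)




open Real MeasureTheory Filter Finset in
/-- Let α be a Pisot number, λ = 1/α, μ the infinite
Bernoulli convolution with μ̂(ξ) = ∏_{n≥1} cos(2πλⁿξ), and C > 0 with
|μ̂(α^k)| > C for all k ≥ 0. Then ‖μ − T_{λⁿ/2}μ‖ ≥ 2C for all n ∈ ℕ,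
where T_t is translation by t and ‖·‖ is the total variation norm. -/
theorem translates_stay_apart (α lam : ℝ) (hα : IsPisot α)
    (hlam : lam = 1 / α) (μ : Measure ℝ) [IsProbabilityMeasure μ]
    (hF : ∀ ξ : ℝ, Tendsto
        (fun M : ℕ => ((∏ n ∈ Finset.Icc 1 M, Real.cos (2 * π * lam ^ n * ξ) : ℝ) : ℂ))
        atTop (nhds (∫ x, Complex.exp (2 * π * Complex.I * ξ * x) ∂μ)))
    (C : ℝ) (hC : 0 < C)
    (hCk : ∀ k : ℕ,
        C < ‖∫ x, Complex.exp (2 * π * Complex.I * (α ^ k) * x) ∂μ‖) :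
    ∀ n : ℕ, 2 * C ≤ ((μ.toSignedMeasure -
        (μ.map (fun x => x + lam ^ n / 2)).toSignedMeasure).totalVariation
      Set.univ).toReal := by
  intro n
  have hα0 : (0:ℝ) < α := lt_trans one_pos hα.1
  set c : ℝ := lam ^ n / 2 with hc
  set f : ℝ → ℂ := fun x => Complex.exp (2 * π * Complex.I * (α ^ n) * x) with hfdef
  have hfc : Continuous f := by fun_prop
  have hbd : ∀ x, ‖f x‖ ≤ 1 := by
    intro x
    have h : (2 * ↑π * Complex.I * (α:ℂ) ^ n * ↑x) = ↑(2 * π * α ^ n * x) * Complex.I := by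
      push_cast; ring
    simp only [hfdef, h, Complex.norm_exp_ofReal_mul_I]
    exact le_refl 1
  set ν : Measure ℝ := μ.map (fun x => x + c) with hν
  haveI : IsProbabilityMeasure ν :=
    Measure.isProbabilityMeasure_map (measurable_id.add_const c).aemeasurable
  have hmap : ∫ x, f x ∂ν = -∫ x, f x ∂μ := by
    rw [hν, integral_map (measurable_add_const c).aemeasurable hfc.aestronglyMeasurable]
    have hval : ∀ x : ℝ, f (x + c) = - f x := by
      intro x
      have hlc : (α:ℝ) ^ n * c = 1 / 2 := by
        rw [hc, hlam]
        field_simp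
        rw [← mul_pow, mul_one_div_cancel hα0.ne', one_pow]
      have h2 : ((α:ℂ)) ^ n * (c:ℂ) = 1/2 := by
        rw [show ((α:ℂ))^n*(c:ℂ) = ((α^n*c : ℝ) : ℂ) by push_cast; ring, hlc]
        norm_num
      have hE : (2*(π:ℂ)*Complex.I*(α:ℂ)^n*((x:ℂ)+(c:ℂ)))
          = 2*(π:ℂ)*Complex.I*(α:ℂ)^n*(x:ℂ) + π*Complex.I := by
        linear_combination 2*(π:ℂ)*Complex.I*h2
      simp only [hfdef]
      push_cast
      rw [hE, Complex.exp_add, Complex.exp_pi_mul_I]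
      ring
    simp only [hval, integral_neg]
  have key := tv_bound μ ν f hfc hbd
  rw [hmap, sub_neg_eq_add, ← two_smul ℂ (∫ x, f x ∂μ)] at key
  have hnorm : ‖(2:ℂ) • ∫ x, f x ∂μ‖ = 2 * ‖∫ x, f x ∂μ‖ := by
    rw [norm_smul]; norm_num
  rw [hnorm] at key
  refine le_trans ?_ key
  have := hCk n
  push_cast at this ⊢
  nlinarith
end
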